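/- Let S be a real symmetric invertible matrix with negative spectral subspace N(S), and K(z) the associated Krein matrix for the pencil (R − zS). For z real and z → −∞, each eigenvalue r_j(z) of K(z) satisfies r_j(z)/z → (a positive limit); in particular, every Krein eigenvalue is negative for all sufficiently negative real z. (It suffices to show: lim_{z→−∞} K(z)/z = −S_N, and −S_N is positive definite.) -/

import Mathlib

open Matrix Filter

/-- The Gram matrix `(⟨s i, A (s j)⟩)` of a real matrix `A` on the family `s`. -/
def gramR {n k : ℕ} (A : Matrix (Fin n) (Fin n) ℝ) (s : Fin k → Fin n → ℝ) :
    Matrix (Fin k) (Fin k) ℝ :=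
  Matrix.of fun i j => s i ⬝ᵥ A.mulVec (s j)

/-- The matrix `B` whose `j`-th column is `S₊^{-1/2} P R s j = T (P (R (s j)))`. -/
def Bmat {n k : ℕ} (T P R : Matrix (Fin n) (Fin n) ℝ) (s : Fin k → Fin n → ℝ) :
    Matrix (Fin n) (Fin k) ℝ :=
  Matrix.of fun i j => (T.mulVec (P.mulVec (R.mulVec (s j)))) i

/-- The Krein matrix for real `z`: `K(z) = R_N - z S_N - Bᵀ (R̃ - z)⁻¹ B` with
`R̃ = T R T`, `T = S₊^{-1/2}`. -/
noncomputable def KreinMatrixR {n k : ℕ} (R S P T : Matrix (Fin n) (Fin n) ℝ)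
    (s : Fin k → Fin n → ℝ) (z : ℝ) : Matrix (Fin k) (Fin k) ℝ :=
  gramR R s - z • gramR S s -
    (Bmat T P R s)ᵀ * ((T * R * T) - z • 1)⁻¹ * Bmat T P R s

/-- under the standard Krein-matrix construction, `K(z)/z → -S_N` as
`z → -∞` along ℝ, and `-S_N` is positive definite; in particular every Krein eigenvalue
is negative for all sufficiently negative real `z`. -/
theorem kreinMatrix_atBot (n k : ℕ) (S R : Matrix (Fin n) (Fin n) ℝ)
    (hS : Sᵀ = S) (hSh : S.IsHermitian) (hR : Rᵀ = R) (hSinv : IsUnit S.det)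
    (hkneg : Nat.card {i // hSh.eigenvalues i < 0} = k)
    (s : Fin k → Fin n → ℝ) (μ : Fin k → ℝ)
    (hon : ∀ i j, s i ⬝ᵥ s j = if i = j then (1:ℝ) else 0)
    (heig : ∀ i, S.mulVec (s i) = μ i • s i) (hμ : ∀ i, μ i < 0)
    (P : Matrix (Fin n) (Fin n) ℝ) (hPsym : Pᵀ = P) (hPidem : P * P = P)
    (hPfix : ∀ x : Fin n → ℝ, P.mulVec x = x ↔ ∀ i, s i ⬝ᵥ x = 0)
    (T : Matrix (Fin n) (Fin n) ℝ) (hT : Tᵀ = T) (hTP : P * T * P = T)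
    (hTsq : T * (P * S * P) * T = P)
    (hTpos : ∀ x : Fin n → ℝ, P.mulVec x = x → x ≠ 0 → 0 < x ⬝ᵥ T.mulVec x) :
    Tendsto (fun z : ℝ => z⁻¹ • KreinMatrixR R S P T s z) atBot
        (nhds (-(gramR S s))) ∧
      (-(gramR S s)).PosDef := by
  have hGdiag : gramR S s = Matrix.diagonal μ := by
    ext i j
    simp only [gramR, Matrix.of_apply, heig, Matrix.diagonal_apply]
    rw [dotProduct_smul, hon]
    by_cases h : i = j <;> simp [h]
  constructor
  · -- the limit
    set M := T * R * T with hM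
    set B := Bmat T P R s with hB
    have hinv : Tendsto (fun z : ℝ => z⁻¹) atBot (nhds 0) := by
      have h := (tendsto_neg_atBot_atTop (G := ℝ)).inv_tendsto_atTop
      have h2 := h.neg
      simp only [Pi.inv_apply, inv_neg, neg_neg, neg_zero] at h2
      exact h2
    -- the map z ↦ z⁻¹ • M - 1 tends to -1
    have hlin : Tendsto (fun z : ℝ => z⁻¹ • M - 1) atBot (nhds (-1)) := by
      have : Tendsto (fun z : ℝ => z⁻¹ • M - 1) atBot (nhds ((0:ℝ) • M - 1)) :=
        (hinv.smul_const M).sub_const 1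
      simpa using this
    have hneg1 : ((-1 : Matrix (Fin n) (Fin n) ℝ)).det ≠ 0 := by
      simp [Matrix.det_neg]
    -- continuity of inverse at -1
    have hinvcont : ContinuousAt Inv.inv (-1 : Matrix (Fin n) (Fin n) ℝ) :=
      continuousAt_matrix_inv _ (NormedRing.inverse_continuousAt
        (IsUnit.unit (isUnit_iff_ne_zero.mpr hneg1)))
    have hg : Tendsto (fun z : ℝ => (z⁻¹ • M - 1)⁻¹) atBot
        (nhds ((-1 : Matrix (Fin n) (Fin n) ℝ)⁻¹)) :=
      (hinvcont.tendsto).comp hlin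
    -- eventual determinant invertibility
    have hdet : Tendsto (fun z : ℝ => (z⁻¹ • M - 1).det) atBot
        (nhds ((-1 : Matrix (Fin n) (Fin n) ℝ).det)) :=
      (Continuous.matrix_det continuous_id).continuousAt.tendsto.comp hlin
    have hev : ∀ᶠ z : ℝ in atBot, (z⁻¹ • M - 1).det ≠ 0 := hdet.eventually_ne hneg1
    have hev0 : ∀ᶠ z : ℝ in atBot, z ≠ 0 :=
      eventually_ne_atBot 0
    -- eventual equality
    have heq : ∀ᶠ z : ℝ in atBot,
        z⁻¹ • KreinMatrixR R S P T s z =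
          z⁻¹ • gramR R s - gramR S s -
            (z⁻¹ * z⁻¹) • (Bᵀ * (z⁻¹ • M - 1)⁻¹ * B) := by
      filter_upwards [hev, hev0] with z hz hz0
      have hzu : (M - z • 1) = z • (z⁻¹ • M - 1) := by
        rw [smul_sub, smul_smul, mul_inv_cancel₀ hz0, one_smul]
      have hMi : (M - z • 1)⁻¹ = z⁻¹ • (z⁻¹ • M - 1)⁻¹ := by
        haveI := invertibleOfNonzero hz0
        rw [hzu, Matrix.inv_smul z (A := z⁻¹ • M - 1) (isUnit_iff_ne_zero.mpr hz), invOf_eq_inv]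
      unfold KreinMatrixR
      rw [← hM, ← hB, hMi]
      rw [smul_sub, smul_sub, smul_smul, inv_mul_cancel₀ hz0, one_smul]
      congr 1
      rw [Matrix.mul_smul, Matrix.smul_mul, smul_smul]
    -- limits of the pieces
    have h1 : Tendsto (fun z : ℝ => z⁻¹ • gramR R s) atBot (nhds 0) := by
      simpa using hinv.smul_const (gramR R s)
    have h2 : Tendsto (fun z : ℝ => (z⁻¹ * z⁻¹) • (Bᵀ * (z⁻¹ • M - 1)⁻¹ * B))
        atBot (nhds 0) := by
      have hsq : Tendsto (fun z : ℝ => z⁻¹ * z⁻¹) atBot (nhds 0) := by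
        simpa using hinv.mul hinv
      have hmat : Tendsto (fun z : ℝ => Bᵀ * (z⁻¹ • M - 1)⁻¹ * B) atBot
          (nhds (Bᵀ * (-1 : Matrix (Fin n) (Fin n) ℝ)⁻¹ * B)) := by
        have hFcont : Continuous fun X : Matrix (Fin n) (Fin n) ℝ => Bᵀ * X * B :=
          (continuous_const.matrix_mul continuous_id).matrix_mul continuous_const
        exact (hFcont.tendsto _).comp hg
      simpa using hsq.smul hmat
    have hmain : Tendsto (fun z : ℝ =>
        z⁻¹ • gramR R s - gramR S s -
          (z⁻¹ * z⁻¹) • (Bᵀ * (z⁻¹ • M - 1)⁻¹ * B)) atBot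
        (nhds (-(gramR S s))) := by
      have := (h1.sub (tendsto_const_nhds (x := gramR S s))).sub h2
      simpa using this
    exact hmain.congr' (heq.mono fun z h => h.symm)
  · rw [hGdiag, Matrix.diagonal_neg]
    exact Matrix.PosDef.diagonal fun i => by simpa using neg_pos.mpr (hμ i)
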